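/- Let μ_n and μ be finite measures on a measurable space such that μ_n(E) → μ(E) for every measurable set E, and suppose all measures are bounded by a common constant. Then for any measurable function f with 0 ≤ f ≤ M, the integrals converge: ∫ f dμ_n → ∫ f dμ. Specifically, |∫ f dμ_n − ∫ f dμ| ≤ M(ν_n⁺(S) + ν_n⁻(S)) where ν_n = μ_n − μ has Jordan decomposition ν_n⁺ − ν_n⁻, and ν_n^±(S) → 0 by the Hahn decomposition. -/

import Mathlib

open MeasureTheory Filter ENNReal

lemma staircase_bounds (h a : ℝ≥0∞) (hh : h ≠ ∞) (N : ℕ) (ha : a < N * h) :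
    (∑ k ∈ Finset.range N, if ((k : ℝ≥0∞) + 1) * h ≤ a then h else 0) ≤ a ∧
    a ≤ (∑ k ∈ Finset.range N, if ((k : ℝ≥0∞) + 1) * h ≤ a then h else 0) + h := by
  set S : ℕ → ℝ≥0∞ := fun n => ∑ k ∈ Finset.range n, if ((k : ℝ≥0∞) + 1) * h ≤ a then h else 0
    with hS
  have Sle : ∀ n, S n ≤ n * h := by
    intro n
    calc S n ≤ ∑ k ∈ Finset.range n, h :=
          Finset.sum_le_sum (fun k _ => by split <;> simp)
      _ = n * h := by simp [Finset.sum_const, nsmul_eq_mul]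
  have key : ∀ n, S n ≤ a ∧ (S n = n * h ∨ a < S n + h) := by
    intro n
    induction n with
    | zero => simp [hS]
    | succ n ih =>
      have hsucc : S (n + 1) = S n + (if ((n : ℝ≥0∞) + 1) * h ≤ a then h else 0) := by
        simp [hS, Finset.sum_range_succ]
      by_cases hc : ((n : ℝ≥0∞) + 1) * h ≤ a
      · have hSn : S n = n * h := by
          rcases ih.2 with heq | hlt
          · exact heq
          · exfalso
            have h1 : (n : ℝ≥0∞) * h + h ≤ a := by
              calc (n : ℝ≥0∞) * h + h = ((n : ℝ≥0∞) + 1) * h := by ring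
                _ ≤ a := hc
            have h2 : (n : ℝ≥0∞) * h + h < S n + h := lt_of_le_of_lt h1 hlt
            have h3 : (n : ℝ≥0∞) * h < S n := by
              exact (ENNReal.add_lt_add_iff_right hh).mp h2
            exact absurd (Sle n) (not_le.mpr h3)
        constructor
        · rw [hsucc, if_pos hc, hSn]
          calc (n : ℝ≥0∞) * h + h = ((n : ℝ≥0∞) + 1) * h := by ring
            _ ≤ a := hc
        · left
          rw [hsucc, if_pos hc, hSn]
          push_cast
          ring
      · have hsucc' : S (n + 1) = S n := by rw [hsucc, if_neg hc, add_zero]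
        constructor
        · rw [hsucc']; exact ih.1
        · right
          rw [hsucc']
          rcases ih.2 with heq | hlt
          · rw [heq]
            calc a < ((n : ℝ≥0∞) + 1) * h := not_le.mp hc
              _ = (n : ℝ≥0∞) * h + h := by ring
          · exact hlt
  have hN := key N
  rcases hN.2 with heq | hlt
  · exact absurd (lt_of_le_of_lt (heq ▸ hN.1) ha) (lt_irrefl _)
  · exact ⟨hN.1, le_of_lt hlt⟩

/-- Setwise convergence of uniformly bounded finite measures implies convergence of
(lower Lebesgue) integrals of uniformly bounded nonnegative measurable functions. -/
theorem setwise_convergence_integral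
    {Ω : Type*} [MeasurableSpace Ω] (μn : ℕ → Measure Ω) (μ : Measure Ω)
    (C : ℝ≥0∞) (hC : C ≠ ∞)
    (hbn : ∀ n, μn n Set.univ ≤ C) (hb : μ Set.univ ≤ C)
    (hconv : ∀ E : Set Ω, MeasurableSet E → Tendsto (fun n => μn n E) atTop (nhds (μ E)))
    (f : Ω → ℝ≥0∞) (hf : Measurable f)
    (M : ℝ≥0∞) (hM : M ≠ ∞) (hfM : ∀ ω, f ω ≤ M) :
    Tendsto (fun n => ∫⁻ ω, f ω ∂(μn n)) atTop (nhds (∫⁻ ω, f ω ∂μ)) := by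
  -- the limit integral is finite
  have hIfin : ∀ (ν : Measure Ω), ν Set.univ ≤ C → ∫⁻ ω, f ω ∂ν ≠ ∞ := by
    intro ν hν
    have : ∫⁻ ω, f ω ∂ν ≤ M * C := by
      calc ∫⁻ ω, f ω ∂ν ≤ ∫⁻ _, M ∂ν := lintegral_mono (fun ω => hfM ω)
        _ = M * ν Set.univ := lintegral_const M
        _ ≤ M * C := mul_le_mul_right hν M
    exact ne_top_of_le_ne_top (ENNReal.mul_ne_top hM hC) this
  rw [ENNReal.tendsto_nhds (hIfin μ hb)]
  intro ε hε
  -- choose a small finite step δ with 2 * δ ≤ ε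
  obtain ⟨δ, hδ0, hδtop, h2δ⟩ : ∃ δ : ℝ≥0∞, 0 < δ ∧ δ ≠ ∞ ∧ 2 * δ ≤ ε := by
    rcases eq_or_ne ε ∞ with rfl | hεtop
    · exact ⟨1, zero_lt_one, one_ne_top, le_top⟩
    · refine ⟨ε / 2, ENNReal.div_pos hε.ne' ENNReal.ofNat_ne_top, ?_, ?_⟩
      · exact (ENNReal.div_lt_top hεtop two_ne_zero).ne
      · exact le_of_eq (ENNReal.mul_div_cancel two_ne_zero ENNReal.ofNat_ne_top)
  -- step size h with h * C ≤ δ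
  set h : ℝ≥0∞ := δ / (C + 1) with hh_def
  have hCtop : C + 1 ≠ ∞ := by simp [hC]
  have hC0 : C + 1 ≠ 0 := by simp
  have hh0 : 0 < h := ENNReal.div_pos hδ0.ne' hCtop
  have hhtop : h ≠ ∞ := (ENNReal.div_lt_top hδtop hC0).ne
  have hhC : h * C ≤ δ := by
    calc h * C ≤ h * (C + 1) := mul_le_mul_right (le_self_add) h
      _ = δ := ENNReal.div_mul_cancel hC0 hCtop
  -- choose N with M < N * h
  obtain ⟨N, hN⟩ : ∃ N : ℕ, M < N * h := by
    obtain ⟨N, hN⟩ := ENNReal.exists_nat_gt (show M / h ≠ ∞ from (ENNReal.div_lt_top hM hh0.ne').ne)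
    exact ⟨N, (ENNReal.div_lt_iff (Or.inl hh0.ne') (Or.inl hhtop)).mp hN⟩
  -- the staircase sets
  set E : ℕ → Set Ω := fun k => {ω | ((k : ℝ≥0∞) + 1) * h ≤ f ω} with hE_def
  have hE : ∀ k, MeasurableSet (E k) := fun k => measurableSet_le measurable_const hf
  -- staircase function
  set g : Ω → ℝ≥0∞ := fun ω => ∑ k ∈ Finset.range N, (E k).indicator (fun _ => h) ω with hg_def
  have hgmeas : ∀ k, Measurable fun ω => (E k).indicator (fun _ : Ω => h) ω :=
    fun k => measurable_const.indicator (hE k)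
  -- pointwise bounds
  have hgf : ∀ ω, g ω ≤ f ω ∧ f ω ≤ g ω + h := by
    intro ω
    have hlt : f ω < N * h := lt_of_le_of_lt (hfM ω) hN
    have := staircase_bounds h (f ω) hhtop N hlt
    have hgeq : g ω = ∑ k ∈ Finset.range N, if ((k : ℝ≥0∞) + 1) * h ≤ f ω then h else 0 := by
      simp only [hg_def]
      refine Finset.sum_congr rfl (fun k _ => ?_)
      by_cases hk : ((k : ℝ≥0∞) + 1) * h ≤ f ω
      · rw [if_pos hk]
        exact Set.indicator_of_mem (show ω ∈ E k from hk) _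
      · rw [if_neg hk]
        exact Set.indicator_of_notMem (show ω ∉ E k from hk) _
    rw [hgeq]
    exact this
  -- integral of g
  have hgint : ∀ ν : Measure Ω, ∫⁻ ω, g ω ∂ν = ∑ k ∈ Finset.range N, h * ν (E k) := by
    intro ν
    rw [hg_def]
    rw [lintegral_finset_sum _ (fun k _ => hgmeas k)]
    refine Finset.sum_congr rfl (fun k _ => ?_)
    rw [lintegral_indicator_const (hE k)]
  -- integral bounds
  have hints : ∀ ν : Measure Ω, ν Set.univ ≤ C →
      ∫⁻ ω, g ω ∂ν ≤ ∫⁻ ω, f ω ∂ν ∧ ∫⁻ ω, f ω ∂ν ≤ ∫⁻ ω, g ω ∂ν + δ := by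
    intro ν hν
    constructor
    · exact lintegral_mono (fun ω => (hgf ω).1)
    · calc ∫⁻ ω, f ω ∂ν ≤ ∫⁻ ω, g ω + h ∂ν := lintegral_mono (fun ω => (hgf ω).2)
        _ = ∫⁻ ω, g ω ∂ν + h * ν Set.univ := by
            rw [lintegral_add_right _ measurable_const, lintegral_const]
        _ ≤ ∫⁻ ω, g ω ∂ν + δ := by
            gcongr
            exact le_trans (mul_le_mul_right hν h) hhC
  -- convergence of the staircase integrals
  have hSconv : Tendsto (fun n => ∫⁻ ω, g ω ∂(μn n)) atTop (nhds (∫⁻ ω, g ω ∂μ)) := by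
    simp only [hgint]
    exact tendsto_finset_sum _ (fun k _ => ENNReal.Tendsto.const_mul (hconv (E k) (hE k)) (Or.inr hhtop))
  have hSfin : ∫⁻ ω, g ω ∂μ ≠ ∞ :=
    ne_top_of_le_ne_top (hIfin μ hb) (hints μ hb).1
  rw [ENNReal.tendsto_nhds hSfin] at hSconv
  filter_upwards [hSconv δ hδ0] with n hn
  obtain ⟨hn1, hn2⟩ := hn
  have hSle : ∫⁻ ω, g ω ∂μ ≤ ∫⁻ ω, g ω ∂(μn n) + δ := tsub_le_iff_right.mp hn1
  constructor
  · -- I - ε ≤ In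
    rw [tsub_le_iff_right]
    calc ∫⁻ ω, f ω ∂μ ≤ ∫⁻ ω, g ω ∂μ + δ := (hints μ hb).2
      _ ≤ (∫⁻ ω, g ω ∂(μn n) + δ) + δ := by gcongr
      _ ≤ ∫⁻ ω, f ω ∂(μn n) + (δ + δ) := by
          rw [add_assoc]; exact add_le_add_left (hints (μn n) (hbn n)).1 _
      _ ≤ ∫⁻ ω, f ω ∂(μn n) + ε := by gcongr; rw [← two_mul]; exact h2δ
  · -- In ≤ I + ε
    calc ∫⁻ ω, f ω ∂(μn n) ≤ ∫⁻ ω, g ω ∂(μn n) + δ := (hints (μn n) (hbn n)).2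
      _ ≤ (∫⁻ ω, g ω ∂μ + δ) + δ := by gcongr
      _ ≤ ∫⁻ ω, f ω ∂μ + (δ + δ) := by
          rw [add_assoc]; exact add_le_add_left (hints μ hb).1 _
      _ ≤ ∫⁻ ω, f ω ∂μ + ε := by gcongr; rw [← two_mul]; exact h2δ
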